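/- For any a < a̲ := max{0, (αk − (α−β̲)|I_{x̄}|)/V_{x̄}} (under the linear sandwich hypotheses), the rank satisfies r(a, A) < k; i.e., every such a is infeasible. -/

import Mathlib

open scoped Classical

/-- The rank of `x` in the multiset `A = ⊎_i { d_j / v_i }`. -/
noncomputable def rankA {n : ℕ} (d : ℕ → ℝ) (v : Fin n → ℝ) (x : ℝ) : ℕ :=
  ∑ i : Fin n, Nat.card {j : ℕ | d j / v i ≤ x}

private lemma card_Iic_nat (m : ℕ) : Nat.card (Set.Iic m) = m + 1 := by
  rw [Nat.card_eq_card_toFinset]; simp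

/-- Every `a < a̲ = max{0, (αk − (α−β̲)|I_{x̄}|)/V_{x̄}}` is infeasible: `r(a, A) < k`. -/
theorem below_lower_bound_infeasible
    {n : ℕ} (d : ℕ → ℝ) (δ δinv : ℝ → ℝ) (v : Fin n → ℝ)
    (α βl βu : ℝ) (k : ℕ) (astar xbar : ℝ)
    (hd0 : 0 ≤ d 0) (hdmono : StrictMono d) (hdunb : ∀ M : ℝ, ∃ j : ℕ, M < d j)
    (hv : ∀ i, 0 < v i) (hk : 1 ≤ k)
    (hα : 0 < α) (hβl0 : 0 ≤ βl) (hβlα : βl ≤ α) (hβu : 0 ≤ βu)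
    (hδc : ContinuousOn δ (Set.Ici 0)) (hδm : StrictMonoOn δ (Set.Ici 0))
    (hδd : ∀ j : ℕ, δ (j : ℝ) = d j)
    (hinv : ∀ x : ℝ, d 0 ≤ x → 0 ≤ δinv x ∧ δ (δinv x) = x)
    (hinv' : ∀ x : ℝ, x < d 0 → δinv x ∈ Set.Ico (-1 : ℝ) 0)
    (hsand : ∀ x : ℝ, 0 ≤ x → α * x + βl ≤ δ x ∧ δ x ≤ α * x + βu)
    -- `astar` is the k-th smallest element of `A` (counting multiplicity)
    (hastar_mem : ∃ i : Fin n, ∃ j : ℕ, d j / v i = astar)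
    (hastar_rank : k ≤ rankA d v astar)
    (hastar_min : ∀ y : ℝ, y < astar → rankA d v y < k)
    (hxbar : astar < xbar) :
    ∀ a : ℝ,
      a < max 0 ((α * k - (α - βl) * ((Finset.univ.filter (fun i : Fin n => d 0 / xbar < v i)).card : ℝ))
            / (∑ i ∈ Finset.univ.filter (fun i => d 0 / xbar < v i), v i)) →
      rankA d v a < k := by
  intro a ha
  apply hastar_min a
  refine lt_of_lt_of_le ha ?_
  have hastar0 : 0 ≤ astar := by
    obtain ⟨i, j, hij⟩ := hastar_mem
    rw [← hij]
    exact div_nonneg (le_trans hd0 (hdmono.monotone (Nat.zero_le j))) (hv i).le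
  set I := Finset.univ.filter (fun i : Fin n => d 0 / xbar < v i) with hI
  refine max_le hastar0 ?_
  rcases Finset.eq_empty_or_nonempty I with hIe | hIne
  · rw [hIe]; simp [hastar0]
  · have hV : 0 < ∑ i ∈ I, v i := Finset.sum_pos (fun i _ => (hv i)) hIne
    rw [div_le_iff₀ hV]
    have hxbar0 : 0 < xbar := lt_of_le_of_lt hastar0 hxbar
    -- sandwich lower bound on d
    have hdl : ∀ j : ℕ, α * j + βl ≤ d j := fun j => by
      have := (hsand j (Nat.cast_nonneg j)).1
      rwa [hδd j] at this
    -- per-voter count bound for i ∈ I (in fact any i)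
    have hcb : ∀ i : Fin n,
        α * (Nat.card {j : ℕ | d j / v i ≤ astar} : ℝ) ≤ astar * v i - βl + α := by
      intro i
      set t : ℝ := (astar * v i - βl) / α with ht
      have htm1 : -1 ≤ t := by
        rw [ht, le_div_iff₀ hα]
        have : 0 ≤ astar * v i := mul_nonneg hastar0 (hv i).le
        nlinarith
      have hsub : {j : ℕ | d j / v i ≤ astar} ⊆ {j : ℕ | (j : ℝ) ≤ t} := by
        intro j hj
        simp only [Set.mem_setOf_eq] at hj ⊢
        have hdj : d j ≤ astar * v i := (div_le_iff₀ (hv i)).1 hj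
        rw [ht, le_div_iff₀ hα]
        have := hdl j
        nlinarith
      rcases lt_or_ge t 0 with htn | htp
      · have : {j : ℕ | d j / v i ≤ astar} = ∅ := by
          apply Set.eq_empty_of_forall_notMem
          intro j hj
          have := hsub hj
          simp only [Set.mem_setOf_eq] at this
          have : (0 : ℝ) ≤ t := le_trans (Nat.cast_nonneg j) this
          linarith
        rw [this]
        simp only [Nat.card_eq_fintype_card, Set.card_empty]
        push_cast
        have : α * (-1 : ℝ) ≤ α * t := by
          exact mul_le_mul_of_nonneg_left htm1 hα.le
        have hαt : α * t = astar * v i - βl := by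
          rw [ht, mul_div_cancel₀ _ hα.ne']
        nlinarith
      · set m : ℕ := ⌊t⌋.toNat with hm
        have hmt : (m : ℝ) ≤ t := by
          have h1 : ((⌊t⌋.toNat : ℤ) : ℝ) ≤ t := by
            rw [Int.toNat_of_nonneg (Int.floor_nonneg.2 htp)]
            exact Int.floor_le t
          exact_mod_cast h1
        have hsub2 : {j : ℕ | d j / v i ≤ astar} ⊆ Set.Iic m := by
          intro j hj
          have hjt := hsub hj
          simp only [Set.mem_setOf_eq] at hjt
          simp only [Set.mem_Iic]
          have : (j : ℤ) ≤ ⌊t⌋ := Int.le_floor.2 (by exact_mod_cast hjt)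
          omega
        have hcard : Nat.card {j : ℕ | d j / v i ≤ astar} ≤ m + 1 := by
          calc Nat.card {j : ℕ | d j / v i ≤ astar}
              ≤ Nat.card (Set.Iic m) := Nat.card_mono (Set.finite_Iic m) hsub2
            _ = m + 1 := card_Iic_nat m
        have hcard' : (Nat.card {j : ℕ | d j / v i ≤ astar} : ℝ) ≤ (m : ℝ) + 1 := by
          exact_mod_cast hcard
        have hαt : α * t = astar * v i - βl := by
          rw [ht, mul_div_cancel₀ _ hα.ne']
        have hct : (Nat.card {j : ℕ | d j / v i ≤ astar} : ℝ) ≤ t + 1 := by linarith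
        nlinarith [mul_le_mul_of_nonneg_left hct hα.le]
    -- for i ∉ I the count is zero
    have hz : ∀ i : Fin n, i ∉ I → Nat.card {j : ℕ | d j / v i ≤ astar} = 0 := by
      intro i hi
      have hvi : v i ≤ d 0 / xbar := by
        rw [hI] at hi
        simp only [Finset.mem_filter, Finset.mem_univ, true_and, not_lt] at hi
        exact hi
      have : {j : ℕ | d j / v i ≤ astar} = ∅ := by
        apply Set.eq_empty_of_forall_notMem
        intro j hj
        simp only [Set.mem_setOf_eq] at hj
        have hdj : d j ≤ astar * v i := (div_le_iff₀ (hv i)).1 hj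
        have h1 : astar * v i < xbar * v i := by
          exact mul_lt_mul_of_pos_right hxbar (hv i)
        have h2 : xbar * v i ≤ xbar * (d 0 / xbar) :=
          mul_le_mul_of_nonneg_left hvi hxbar0.le
        rw [mul_div_cancel₀ _ hxbar0.ne'] at h2
        have hd0j : d 0 ≤ d j := hdmono.monotone (Nat.zero_le j)
        linarith
      rw [this]
      simp
    -- k ≤ sum over I of counts
    have hks : (k : ℝ) ≤ ∑ i ∈ I, (Nat.card {j : ℕ | d j / v i ≤ astar} : ℝ) := by
      have h1 : rankA d v astar = ∑ i ∈ I, Nat.card {j : ℕ | d j / v i ≤ astar} := by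
        rw [rankA]
        rw [← Finset.sum_subset (Finset.subset_univ I)]
        intro i _ hi
        exact hz i hi
      have : (k : ℝ) ≤ (rankA d v astar : ℝ) := by exact_mod_cast hastar_rank
      rw [h1] at this
      push_cast at this
      exact this
    -- combine
    have hsum : α * (k : ℝ) ≤ ∑ i ∈ I, (astar * v i - βl + α) := by
      calc α * (k : ℝ) ≤ α * ∑ i ∈ I, (Nat.card {j : ℕ | d j / v i ≤ astar} : ℝ) :=
            mul_le_mul_of_nonneg_left hks hα.le
        _ = ∑ i ∈ I, α * (Nat.card {j : ℕ | d j / v i ≤ astar} : ℝ) := Finset.mul_sum _ _ _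
        _ ≤ ∑ i ∈ I, (astar * v i - βl + α) := Finset.sum_le_sum (fun i _ => hcb i)
    have hexp : ∑ i ∈ I, (astar * v i - βl + α)
        = astar * (∑ i ∈ I, v i) + (α - βl) * (I.card : ℝ) := by
      rw [Finset.sum_add_distrib, Finset.sum_sub_distrib, ← Finset.mul_sum]
      simp [Finset.sum_const, nsmul_eq_mul]
      ring
    rw [hexp] at hsum
    linarith
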